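/- For the cycle graph C_n on n ≥ 5 vertices, the isolate secure domination number satisfies γ_{0s}(C_n) = ⌈3n/7⌉. -/

import Mathlib

def Dominates {V : Type*} (G : SimpleGraph V) (S : Finset V) : Prop :=
  ∀ u : V, u ∈ S ∨ ∃ v ∈ S, G.Adj v u
def IsIDS {V : Type*} (G : SimpleGraph V) (S : Finset V) : Prop :=
  Dominates G S ∧ ∃ v ∈ S, ∀ w ∈ S, ¬ G.Adj v w
def IsISDS {V : Type*} [DecidableEq V] (G : SimpleGraph V) (S : Finset V) : Prop :=
  IsIDS G S ∧ ∀ u ∉ S, ∃ v ∈ S, G.Adj u v ∧ IsIDS G (insert u (S.erase v))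

open Finset SimpleGraph
open Fin.CommRing

section helpers
variable {n : ℕ} [NeZero n]

lemma castval (hn : 2 ≤ n) {a : ℕ} (h : a < n) : ((a : Fin n)).val = a := by
  simp [Fin.val_natCast, Nat.mod_eq_of_lt h]

lemma cast_inj' (hn : 2 ≤ n) {a b : ℕ} (ha : a < n) (hb : b < n) :
    (a : Fin n) = (b : Fin n) ↔ a = b := by
  rw [Fin.ext_iff, castval hn ha, castval hn hb]

lemma cast_add_one (a : ℕ) : (a : Fin n) + 1 = ((a + 1 : ℕ) : Fin n) := by push_cast; ring

lemma link_of {a b : ℕ} (h : a + 1 = b) : (a : Fin n) + 1 = (b : Fin n) := by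
  rw [cast_add_one, h]

lemma link_wrap {a : ℕ} (h : a + 1 = n) : (a : Fin n) + 1 = ((0 : ℕ) : Fin n) := by
  rw [cast_add_one, h]; simp

lemma addCast_inj (hn : 2 ≤ n) (x : Fin n) {i j : ℕ} (hi : i < n) (hj : j < n) :
    x + (i : Fin n) = x + (j : Fin n) ↔ i = j := by
  rw [add_right_inj, cast_inj' hn hi hj]

lemma adj_iff (hn : 2 ≤ n) (u v : Fin n) :
    (cycleGraph n).Adj u v ↔ u = v + 1 ∨ v = u + 1 := by
  obtain ⟨m, rfl⟩ : ∃ m, n = m + 2 := ⟨n - 2, by omega⟩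
  rw [SimpleGraph.cycleGraph_adj]
  constructor
  · rintro (h | h)
    · left; rw [← h]; ring
    · right; rw [← h]; ring
  · rintro (h | h)
    · left; rw [h]; ring
    · right; rw [h]; ring

end helpers

section lower
variable {n : ℕ} [NeZero n] (hn : 7 ≤ n) {S : Finset (Fin n)}
  (hS : IsISDS (SimpleGraph.cycleGraph n) S)

include hn hS

lemma factA (x : Fin n) : x + (0:ℕ) ∈ S ∨ x + (1:ℕ) ∈ S ∨ x + (2:ℕ) ∈ S := by
  have hd := hS.1.1 (x + (1:ℕ))
  rcases hd with h | ⟨v, hv, hadj⟩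
  · right; left; exact h
  · rw [adj_iff (by omega)] at hadj
    rcases hadj with h | h
    · right; right
      have : v = x + (2:ℕ) := by rw [h]; push_cast; ring
      rwa [← this]
    · left
      have : v = x + (0:ℕ) := by
        have h2 : v + 1 = x + (0:ℕ) + 1 := by rw [← h]; push_cast; ring
        exact add_right_cancel h2
      rwa [← this]

lemma secDom : ∀ u ∉ S, ∃ v ∈ S, (u = v + 1 ∨ v = u + 1) ∧
    Dominates (SimpleGraph.cycleGraph n) (insert u (S.erase v)) := by
  intro u hu
  obtain ⟨v, hv, hadj, hIDS⟩ := hS.2 u hu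
  exact ⟨v, hv, (adj_iff (by omega) u v).1 hadj, hIDS.1⟩

lemma factB (x : Fin n) :
    ¬(x + (0:ℕ) ∉ S ∧ x + (1:ℕ) ∉ S ∧ x + (2:ℕ) ∈ S ∧ x + (3:ℕ) ∉ S ∧ x + (4:ℕ) ∉ S) := by
  rintro ⟨h0, h1, h2, h3, h4⟩
  obtain ⟨v, hv, hadj, hdom⟩ := secDom hn hS (x + (3:ℕ)) h3
  have hv2 : v = x + (2:ℕ) := by
    rcases hadj with h | h
    · have h2' : v + 1 = x + (2:ℕ) + 1 := by rw [← h]; push_cast; ring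
      exact add_right_cancel h2'
    · exfalso
      have : v = x + (4:ℕ) := by rw [h]; push_cast; ring
      rw [this] at hv; exact h4 hv
  subst hv2
  -- now x+1 is undominated by insert (x+3) (S.erase (x+2))
  have hne : ∀ i j : ℕ, i < n → j < n → i ≠ j → x + (i:ℕ) ≠ x + (j:ℕ) := by
    intro i j hi hj hij h
    exact hij ((addCast_inj (by omega) x hi hj).1 h)
  rcases hdom (x + (1:ℕ)) with h | ⟨s, hs, hadj'⟩
  · rcases Finset.mem_insert.1 h with h | h
    · exact hne 1 3 (by omega) (by omega) (by omega) h
    · exact h1 (Finset.mem_of_mem_erase h)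
  · rw [adj_iff (by omega)] at hadj'
    have hs' : s = x + (2:ℕ) ∨ s = x + (0:ℕ) := by
      rcases hadj' with h | h
      · left; rw [h]; push_cast; ring
      · right
        have h2' : s + 1 = x + (0:ℕ) + 1 := by rw [← h]; push_cast; ring
        exact add_right_cancel h2'
    rcases hs' with rfl | rfl
    · rcases Finset.mem_insert.1 hs with h | h
      · exact hne 2 3 (by omega) (by omega) (by omega) h
      · exact (Finset.mem_erase.1 h).1 rfl
    · rcases Finset.mem_insert.1 hs with h | h
      · exact hne 0 3 (by omega) (by omega) (by omega) h
      · exact h0 (Finset.mem_of_mem_erase h)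

lemma factC (x : Fin n) :
    ¬(x + (0:ℕ) ∉ S ∧ x + (1:ℕ) ∉ S ∧ x + (2:ℕ) ∈ S ∧ x + (3:ℕ) ∉ S ∧ x + (4:ℕ) ∈ S ∧
      x + (5:ℕ) ∉ S ∧ x + (6:ℕ) ∉ S) := by
  rintro ⟨h0, h1, h2, h3, h4, h5, h6⟩
  obtain ⟨v, hv, hadj, hdom⟩ := secDom hn hS (x + (3:ℕ)) h3
  have hne : ∀ i j : ℕ, i < n → j < n → i ≠ j → x + (i:ℕ) ≠ x + (j:ℕ) := by
    intro i j hi hj hij h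
    exact hij ((addCast_inj (by omega) x hi hj).1 h)
  have hv2 : v = x + (2:ℕ) ∨ v = x + (4:ℕ) := by
    rcases hadj with h | h
    · left
      have h2' : v + 1 = x + (2:ℕ) + 1 := by rw [← h]; push_cast; ring
      exact add_right_cancel h2'
    · right; rw [h]; push_cast; ring
  rcases hv2 with rfl | rfl
  · -- erased x+2: x+1 undominated
    rcases hdom (x + (1:ℕ)) with h | ⟨s, hs, hadj'⟩
    · rcases Finset.mem_insert.1 h with h | h
      · exact hne 1 3 (by omega) (by omega) (by omega) h
      · exact h1 (Finset.mem_of_mem_erase h)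
    · rw [adj_iff (by omega)] at hadj'
      have hs' : s = x + (2:ℕ) ∨ s = x + (0:ℕ) := by
        rcases hadj' with h | h
        · left; rw [h]; push_cast; ring
        · right
          have h2' : s + 1 = x + (0:ℕ) + 1 := by rw [← h]; push_cast; ring
          exact add_right_cancel h2'
      rcases hs' with rfl | rfl
      · rcases Finset.mem_insert.1 hs with h | h
        · exact hne 2 3 (by omega) (by omega) (by omega) h
        · exact (Finset.mem_erase.1 h).1 rfl
      · rcases Finset.mem_insert.1 hs with h | h
        · exact hne 0 3 (by omega) (by omega) (by omega) h
        · exact h0 (Finset.mem_of_mem_erase h)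
  · -- erased x+4: x+5 undominated
    rcases hdom (x + (5:ℕ)) with h | ⟨s, hs, hadj'⟩
    · rcases Finset.mem_insert.1 h with h | h
      · exact hne 5 3 (by omega) (by omega) (by omega) h
      · exact h5 (Finset.mem_of_mem_erase h)
    · rw [adj_iff (by omega)] at hadj'
      have hs' : s = x + (6:ℕ) ∨ s = x + (4:ℕ) := by
        rcases hadj' with h | h
        · left; rw [h]; push_cast; ring
        · right
          have h2' : s + 1 = x + (4:ℕ) + 1 := by rw [← h]; push_cast; ring
          exact add_right_cancel h2'
      rcases hs' with rfl | rfl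
      · rcases Finset.mem_insert.1 hs with h | h
        · exact hne 6 3 (by omega) (by omega) (by omega) h
        · exact h6 (Finset.mem_of_mem_erase h)
      · rcases Finset.mem_insert.1 hs with h | h
        · exact hne 4 3 (by omega) (by omega) (by omega) h
        · exact (Finset.mem_erase.1 h).1 rfl

end lower

lemma seven_core : ∀ (b0 b1 b2 b3 b4 b5 b6 : Bool),
    (b0 || b1 || b2) → (b1 || b2 || b3) → (b2 || b3 || b4) → (b3 || b4 || b5) → (b4 || b5 || b6) →
    (b0 || b1 || !b2 || b3 || b4) → (b1 || b2 || !b3 || b4 || b5) → (b2 || b3 || !b4 || b5 || b6) →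
    (b0 || b1 || !b2 || b3 || !b4 || b5 || b6) →
    3 ≤ (cond b0 1 0) + (cond b1 1 0) + (cond b2 1 0) + (cond b3 1 0) + (cond b4 1 0) +
        (cond b5 1 0) + (cond b6 1 0) := by decide

lemma seven_window (p : ℕ → Prop) [DecidablePred p]
    (hA : ∀ i, i ≤ 4 → (p i ∨ p (i+1) ∨ p (i+2)))
    (hB : ∀ i, i ≤ 2 → ¬(¬p i ∧ ¬p (i+1) ∧ p (i+2) ∧ ¬p (i+3) ∧ ¬p (i+4)))
    (hC : ¬(¬p 0 ∧ ¬p 1 ∧ p 2 ∧ ¬p 3 ∧ p 4 ∧ ¬p 5 ∧ ¬p 6)) :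
    3 ≤ ∑ j ∈ Finset.range 7, if p j then 1 else 0 := by
  have key : ∀ j, (if p j then 1 else 0) = cond (decide (p j)) 1 0 := by
    intro j; by_cases h : p j <;> simp [h]
  simp only [Finset.sum_range_succ, Finset.sum_range_zero, key, zero_add]
  apply seven_core <;> simp only [Bool.or_eq_true, Bool.not_eq_true', decide_eq_true_iff,
    decide_eq_false_iff_not]
  · have := hA 0 (by omega); norm_num at this ⊢; tauto
  · have := hA 1 (by omega); norm_num at this ⊢; tauto
  · have := hA 2 (by omega); norm_num at this ⊢; tauto
  · have := hA 3 (by omega); norm_num at this ⊢; tauto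
  · have := hA 4 (by omega); norm_num at this ⊢; tauto
  · have := hB 0 (by omega); tauto
  · have := hB 1 (by omega); tauto
  · have := hB 2 (by omega); tauto
  · tauto

section lower2
variable {n : ℕ} [NeZero n] (hn : 7 ≤ n) {S : Finset (Fin n)}
  (hS : IsISDS (SimpleGraph.cycleGraph n) S)

include hn hS

lemma window (a : Fin n) :
    3 ≤ ∑ j ∈ Finset.range 7, if a + ((j : ℕ) : Fin n) ∈ S then 1 else 0 := by
  have conv : ∀ (i k : ℕ), a + ((i:ℕ):Fin n) + ((k:ℕ):Fin n) = a + (((i+k : ℕ)) : Fin n) := by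
    intro i k; push_cast; ring
  apply seven_window (fun j => a + ((j : ℕ) : Fin n) ∈ S)
  · intro i _
    have := factA hn hS (a + ((i:ℕ) : Fin n))
    rw [conv i 0, conv i 1, conv i 2] at this
    simpa using this
  · intro i _ h
    apply factB hn hS (a + ((i:ℕ) : Fin n))
    rw [conv i 0, conv i 1, conv i 2, conv i 3, conv i 4]
    simpa using h
  · intro h
    apply factC hn hS (a + ((0:ℕ) : Fin n))
    rw [conv 0 0, conv 0 1, conv 0 2, conv 0 3, conv 0 4, conv 0 5, conv 0 6]
    simpa using h

lemma lower_bound : (3 * n + 6) / 7 ≤ S.card := by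
  have keysum : ∀ (c : ℕ), (∑ a : Fin n, if a + ((c:ℕ) : Fin n) ∈ S then 1 else 0) = S.card := by
    intro c
    rw [Fintype.sum_equiv (Equiv.addRight ((c:ℕ) : Fin n))
      (fun a => if a + ((c:ℕ) : Fin n) ∈ S then 1 else 0)
      (fun x => if x ∈ S then 1 else 0) (fun a => rfl)]
    rw [Finset.sum_ite_mem, Finset.univ_inter, Finset.sum_const, smul_eq_mul, mul_one]
  have main : 3 * n ≤ 7 * S.card := by
    calc 3 * n = ∑ _a : Fin n, 3 := by simp [mul_comm]
    _ ≤ ∑ a : Fin n, ∑ j ∈ Finset.range 7, (if a + ((j : ℕ) : Fin n) ∈ S then 1 else 0) :=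
        Finset.sum_le_sum (fun a _ => window hn hS a)
    _ = ∑ j ∈ Finset.range 7, ∑ a : Fin n, (if a + ((j : ℕ) : Fin n) ∈ S then 1 else 0) :=
        Finset.sum_comm
    _ = ∑ _j ∈ Finset.range 7, S.card := by
        apply Finset.sum_congr rfl; intro j _; exact keysum j
    _ = 7 * S.card := by simp [mul_comm]
  omega

end lower2


instance {V : Type*} [Fintype V] [DecidableEq V] (G : SimpleGraph V) [DecidableRel G.Adj]
    (S : Finset V) : Decidable (Dominates G S) := by unfold Dominates; infer_instance
instance {V : Type*} [Fintype V] [DecidableEq V] (G : SimpleGraph V) [DecidableRel G.Adj]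
    (S : Finset V) : Decidable (IsIDS G S) := by unfold IsIDS; infer_instance
instance {V : Type*} [Fintype V] [DecidableEq V] (G : SimpleGraph V) [DecidableRel G.Adj]
    (S : Finset V) : Decidable (IsISDS G S) := by unfold IsISDS; infer_instance

def pat (q i : ℕ) : Prop :=
  (i < 7*q ∧ (i % 7 = 0 ∨ i % 7 = 3 ∨ i % 7 = 5)) ∨ (7*q ≤ i ∧ (i - 7*q) % 2 = 0)

instance (q : ℕ) : DecidablePred (pat q) := fun _ => by unfold pat; infer_instance

def SS (n q : ℕ) : Finset (Fin n) := univ.filter (fun x => pat q x.val)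

section upper
variable {n q r : ℕ} [NeZero n] (hn : n = 7*q + r) (hq : 2 ≤ q) (hr : r < 7)

include hn hq hr

lemma card_SS : (SS n q).card = (3 * n + 6) / 7 := by
  have key : ∀ m, m ≤ q → ∑ i ∈ Finset.range (7*m), (if pat q i then 1 else 0) = 3*m := by
    intro m hm
    induction m with
    | zero => simp
    | succ k ih =>
      have h7 : 7*(k+1) = (7*k)+1+1+1+1+1+1+1 := by ring
      rw [h7]
      rw [Finset.sum_range_succ, Finset.sum_range_succ, Finset.sum_range_succ,
        Finset.sum_range_succ, Finset.sum_range_succ, Finset.sum_range_succ,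
        Finset.sum_range_succ, ih (by omega)]
      have e0 : pat q (7*k) := by unfold pat; omega
      have e1 : ¬ pat q (7*k+1) := by unfold pat; omega
      have e2 : ¬ pat q (7*k+1+1) := by unfold pat; omega
      have e3 : pat q (7*k+1+1+1) := by unfold pat; omega
      have e4 : ¬ pat q (7*k+1+1+1+1) := by unfold pat; omega
      have e5 : pat q (7*k+1+1+1+1+1) := by unfold pat; omega
      have e6 : ¬ pat q (7*k+1+1+1+1+1+1) := by unfold pat; omega
      simp [e0, e1, e2, e3, e4, e5, e6]
      omega
  have hcard : (SS n q).card = ∑ i ∈ Finset.range n, (if pat q i then 1 else 0) := by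
    rw [SS, Finset.card_filter]
    exact Fin.sum_univ_eq_sum_range (fun i => if pat q i then 1 else 0) n
  have hsplit : ∑ i ∈ Finset.range n, (if pat q i then 1 else 0)
      = 3*q + ∑ i ∈ Finset.Ico (7*q) n, (if pat q i then 1 else 0) := by
    rw [Finset.range_eq_Ico, ← Finset.sum_Ico_consecutive _ (by omega : 0 ≤ 7*q) (by omega : 7*q ≤ n),
      ← Finset.range_eq_Ico, key q le_rfl]
  have htail : ∑ i ∈ Finset.Ico (7*q) n, (if pat q i then 1 else 0) = (r+1)/2 := by
    rw [Finset.sum_Ico_eq_sum_range]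
    have hn' : n - 7*q = r := by omega
    rw [hn']
    have o0 : pat q (7*q) := by unfold pat; omega
    have o1 : ¬ pat q (7*q+1) := by unfold pat; omega
    have o2 : pat q (7*q+2) := by unfold pat; omega
    have o3 : ¬ pat q (7*q+3) := by unfold pat; omega
    have o4 : pat q (7*q+4) := by unfold pat; omega
    have o5 : ¬ pat q (7*q+5) := by unfold pat; omega
    interval_cases r <;>
      simp only [Finset.sum_range_succ, Finset.sum_range_zero, Nat.add_zero] <;>
      simp [o0, o1, o2, o3, o4, o5]
  rw [hcard, hsplit, htail]
  omega


lemma memS {t : ℕ} (ht : t < n) : ((t : Fin n) ∈ SS n q) ↔ pat q t := by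
  rw [SS, Finset.mem_filter]
  simp [castval (show 2 ≤ n by omega) ht]

lemma memS_val (w : Fin n) : w ∈ SS n q ↔ pat q w.val := by
  rw [SS, Finset.mem_filter]; simp

lemma dom_SS : Dominates (SimpleGraph.cycleGraph n) (SS n q) := by
  have h2n : 2 ≤ n := by omega
  intro x
  have hi : x.val < n := x.isLt
  by_cases hp : pat q x.val
  · left; exact (memS_val hn hq hr x).2 hp
  · right
    have hx : ((x.val : ℕ) : Fin n) = x := Fin.cast_val_eq_self x
    have hi0 : x.val ≠ 0 := by
      intro h; apply hp; rw [h]; unfold pat; omega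
    by_cases hA : (x.val % 7 = 1 ∧ x.val < 7*q) ∨ 7*q ≤ x.val
    · refine ⟨((x.val - 1 : ℕ) : Fin n), (memS hn hq hr (by omega)).2 ?_, ?_⟩
      · unfold pat at hp ⊢; omega
      · rw [adj_iff h2n]; right
        rw [link_of (show x.val - 1 + 1 = x.val by omega), hx]
    · by_cases hw : x.val + 1 = n
      · refine ⟨((0:ℕ) : Fin n), (memS hn hq hr (by omega)).2 ?_, ?_⟩
        · unfold pat; omega
        · rw [adj_iff h2n]; left
          rw [← link_wrap hw, hx]
      · refine ⟨((x.val + 1 : ℕ) : Fin n), (memS hn hq hr (by omega)).2 ?_, ?_⟩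
        · unfold pat at hp ⊢; omega
        · rw [adj_iff h2n]; left
          rw [← link_of (rfl : x.val + 1 = x.val + 1), hx]

lemma iso_SS : ∃ v ∈ SS n q, ∀ w ∈ SS n q, ¬ (SimpleGraph.cycleGraph n).Adj v w := by
  have h2n : 2 ≤ n := by omega
  refine ⟨((3:ℕ) : Fin n), (memS hn hq hr (by omega)).2 (by unfold pat; omega), ?_⟩
  intro w hw hadj
  rw [adj_iff h2n] at hadj
  rcases hadj with h | h
  · -- (3 : Fin n) = w + 1, so w = 2
    have hw2 : w = ((2:ℕ) : Fin n) := by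
      have : ((2:ℕ) : Fin n) + 1 = w + 1 := by rw [link_of (rfl : (2:ℕ)+1 = 3), h]
      exact (add_right_cancel this).symm
    rw [hw2, memS hn hq hr (by omega)] at hw
    unfold pat at hw; omega
  · -- w = 3 + 1 = 4
    rw [link_of (rfl : (3:ℕ)+1 = 4)] at h
    rw [h, memS hn hq hr (by omega)] at hw
    unfold pat at hw; omega

set_option maxHeartbeats 2000000 in
lemma sec_master (i c0 c1 c2 c3 c4 : ℕ)
    (hi : i < n) (h0 : c0 < n) (h1 : c1 < n) (h2 : c2 < n) (h3 : c3 < n) (h4 : c4 < n)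
    (l01 : (c0 : Fin n) + 1 = (c1 : Fin n)) (l12 : (c1 : Fin n) + 1 = (c2 : Fin n))
    (l23 : (c2 : Fin n) + 1 = (c3 : Fin n)) (l34 : (c3 : Fin n) + 1 = (c4 : Fin n))
    (hnp : ¬ pat q i) (huv : i = c1 ∨ i = c3) (hc2 : pat q c2)
    (ch1 : (c0 = i ∨ (pat q c0 ∧ c0 ≠ c2)) ∨ (c1 = i ∨ (pat q c1 ∧ c1 ≠ c2)) ∨ (c2 = i))
    (ch2 : (c1 = i ∨ (pat q c1 ∧ c1 ≠ c2)) ∨ (c2 = i) ∨ (c3 = i ∨ (pat q c3 ∧ c3 ≠ c2)))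
    (ch3 : (c2 = i) ∨ (c3 = i ∨ (pat q c3 ∧ c3 ≠ c2)) ∨ (c4 = i ∨ (pat q c4 ∧ c4 ≠ c2)))
    (hwit : ∃ jb, jb < q ∧ 7*jb+3 ≠ c2 ∧ i ≠ 7*jb+2 ∧ i ≠ 7*jb+4) :
    ∃ v ∈ SS n q, (SimpleGraph.cycleGraph n).Adj ((i : ℕ) : Fin n) v ∧
      IsIDS (SimpleGraph.cycleGraph n)
        (insert ((i : ℕ) : Fin n) ((SS n q).erase v)) := by
  have h2n : 2 ≤ n := by omega
  have hic2 : i ≠ c2 := fun h => hnp (h ▸ hc2)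
  -- membership in the swapped set
  have hmem : ∀ t : ℕ, t < n →
      (((t:ℕ) : Fin n) ∈ insert ((i : ℕ) : Fin n) ((SS n q).erase ((c2 : ℕ) : Fin n)) ↔
        (t = i ∨ (pat q t ∧ t ≠ c2))) := by
    intro t ht
    rw [Finset.mem_insert, Finset.mem_erase, cast_inj' h2n ht hi, memS hn hq hr ht,
      Ne, cast_inj' h2n ht h2]
    exact or_congr Iff.rfl And.comm
  have hmem_val : ∀ w : Fin n,
      (w ∈ insert ((i : ℕ) : Fin n) ((SS n q).erase ((c2 : ℕ) : Fin n)) ↔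
        (w.val = i ∨ (pat q w.val ∧ w.val ≠ c2))) := by
    intro w
    have := hmem w.val w.isLt
    rwa [Fin.cast_val_eq_self] at this
  have adjc : ∀ a b : ℕ, (a : Fin n) + 1 = (b : Fin n) →
      (SimpleGraph.cycleGraph n).Adj ((a:ℕ) : Fin n) ((b:ℕ) : Fin n) := by
    intro a b h; rw [adj_iff h2n]; right; exact h.symm
  refine ⟨((c2 : ℕ) : Fin n), (memS hn hq hr h2).2 hc2, ?_, ?_, ?_⟩
  · -- adjacency of i and c2
    rw [adj_iff h2n]
    rcases huv with h | h
    · subst h; right; exact l12.symm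
    · subst h; left; exact l23.symm
  · -- Dominates
    intro x
    have hxval : ((x.val : ℕ) : Fin n) = x := Fin.cast_val_eq_self x
    by_cases hx1 : x = ((c1 : ℕ) : Fin n)
    · subst hx1
      rcases ch1 with h | h | h
      · right
        exact ⟨_, (hmem c0 h0).2 h, adjc _ _ l01⟩
      · left; exact (hmem c1 h1).2 h
      · right
        refine ⟨_, (hmem c2 h2).2 (Or.inl h), ?_⟩
        rw [adj_iff h2n]; left; exact l12.symm
    · by_cases hx2 : x = ((c2 : ℕ) : Fin n)
      · subst hx2
        rcases ch2 with h | h | h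
        · right; exact ⟨_, (hmem c1 h1).2 h, adjc _ _ l12⟩
        · left; exact (hmem c2 h2).2 (Or.inl h)
        · right
          refine ⟨_, (hmem c3 h3).2 h, ?_⟩
          rw [adj_iff h2n]; left; exact l23.symm
      · by_cases hx3 : x = ((c3 : ℕ) : Fin n)
        · subst hx3
          rcases ch3 with h | h | h
          · right; exact ⟨_, (hmem c2 h2).2 (Or.inl h), adjc _ _ l23⟩
          · left; exact (hmem c3 h3).2 h
          · right
            refine ⟨_, (hmem c4 h4).2 h, ?_⟩
            rw [adj_iff h2n]; left; exact l34.symm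
        · -- x away from c1,c2,c3 : use domination of SS
          rcases dom_SS hn hq hr x with h | ⟨s, hs, hadj⟩
          · left
            rw [hmem_val]
            right
            refine ⟨(memS_val hn hq hr x).1 h, ?_⟩
            intro hv; apply hx2; rw [← hxval, hv]
          · by_cases hsv : s = ((c2 : ℕ) : Fin n)
            · exfalso
              subst hsv
              rw [adj_iff h2n] at hadj
              rcases hadj with h' | h'
              · -- c2 = x + 1 → x = c1
                apply hx1
                have : (c1 : Fin n) + 1 = x + 1 := by rw [l12, h']
                exact (add_right_cancel this).symm
              · -- x = c2 + 1 = c3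
                apply hx3; rw [h', l23]
            · right
              refine ⟨s, ?_, hadj⟩
              rw [hmem_val]
              right
              refine ⟨(memS_val hn hq hr s).1 hs, ?_⟩
              intro hv; apply hsv
              rw [← Fin.cast_val_eq_self s, hv]
  · -- isolated vertex
    obtain ⟨jb, hjb, hw1, hw2, hw3⟩ := hwit
    have hb3 : 7*jb+3 < n := by omega
    have hb2 : 7*jb+2 < n := by omega
    have hb4 : 7*jb+4 < n := by omega
    refine ⟨((7*jb+3 : ℕ) : Fin n), (hmem _ hb3).2 (Or.inr ⟨by unfold pat; omega, hw1⟩), ?_⟩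
    intro w hw hadj
    rw [adj_iff h2n] at hadj
    rcases hadj with h | h
    · -- (7jb+3) = w + 1 → w = 7jb+2
      have hweq : w = ((7*jb+2 : ℕ) : Fin n) := by
        have : ((7*jb+2 : ℕ) : Fin n) + 1 = w + 1 := by
          rw [link_of (rfl : 7*jb+2+1 = 7*jb+3), h]
        exact (add_right_cancel this).symm
      subst hweq
      rw [hmem _ hb2] at hw
      rcases hw with h' | ⟨h', _⟩
      · exact hw2 h'.symm
      · unfold pat at h'; omega
    · -- w = (7jb+3) + 1 = 7jb+4
      rw [link_of (rfl : 7*jb+3+1 = 7*jb+4)] at h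
      subst h
      rw [hmem _ hb4] at hw
      rcases hw with h' | ⟨h', _⟩
      · exact hw3 h'.symm
      · unfold pat at h'; omega

lemma sec_all : ∀ u ∉ SS n q, ∃ v ∈ SS n q, (SimpleGraph.cycleGraph n).Adj u v ∧
    IsIDS (SimpleGraph.cycleGraph n) (insert u ((SS n q).erase v)) := by
  intro u hu
  have h2n : 2 ≤ n := by omega
  have hi : u.val < n := u.isLt
  have hnp : ¬ pat q u.val := fun hp => hu ((memS_val hn hq hr u).2 hp)
  have hx : ((u.val : ℕ) : Fin n) = u := Fin.cast_val_eq_self u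
  rw [← hx]
  set i := u.val with hidef
  unfold pat at hnp
  by_cases hb : i < 7*q
  · by_cases hsh : i % 7 = 2 ∨ i % 7 = 4
    · -- v = i+1 shape
      by_cases hwrap : i + 3 = n
      · exact sec_master hn hq hr i (i-1) i (i+1) (i+2) 0 hi (by omega) (by omega)
          (by omega) (by omega) (by omega)
          (link_of (by omega)) (link_of (by omega)) (link_of (by omega)) (link_wrap (by omega))
          (by unfold pat; omega) (by omega) (by unfold pat; omega)
          (by unfold pat; omega) (by unfold pat; omega) (by unfold pat; omega)
          (by refine ⟨if i ≤ 6 then 1 else 0, ?_, ?_, ?_, ?_⟩ <;> split <;> omega)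
      · exact sec_master hn hq hr i (i-1) i (i+1) (i+2) (i+3) hi (by omega) (by omega)
          (by omega) (by omega) (by omega)
          (link_of (by omega)) (link_of (by omega)) (link_of (by omega)) (link_of (by omega))
          (by unfold pat; omega) (by omega) (by unfold pat; omega)
          (by unfold pat; omega) (by unfold pat; omega) (by unfold pat; omega)
          (by refine ⟨if i ≤ 6 then 1 else 0, ?_, ?_, ?_, ?_⟩ <;> split <;> omega)
    · by_cases h1 : i = 1
      · -- special wraparound case at the start
        exact sec_master hn hq hr i (n-2) (n-1) 0 1 2 hi (by omega) (by omega)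
          (by omega) (by omega) (by omega)
          (link_of (by omega)) (link_wrap (by omega)) (link_of (by omega)) (link_of (by omega))
          (by unfold pat; omega) (by omega) (by unfold pat; omega)
          (by unfold pat; omega) (by unfold pat; omega) (by unfold pat; omega)
          (⟨1, by omega, by omega, by omega, by omega⟩)
      · -- v = i - 1 shape, block positions 1 (i ≥ 8) and 6
        by_cases hwrap : i + 1 = n
        · exact sec_master hn hq hr i (i-3) (i-2) (i-1) i 0 hi (by omega) (by omega)
            (by omega) (by omega) (by omega)
            (link_of (by omega)) (link_of (by omega)) (link_of (by omega)) (link_wrap (by omega))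
            (by unfold pat; omega) (by omega) (by unfold pat; omega)
            (by unfold pat; omega) (by unfold pat; omega) (by unfold pat; omega)
            (by refine ⟨if i ≤ 6 then 1 else 0, ?_, ?_, ?_, ?_⟩ <;> split <;> omega)
        · exact sec_master hn hq hr i (i-3) (i-2) (i-1) i (i+1) hi (by omega) (by omega)
            (by omega) (by omega) (by omega)
            (link_of (by omega)) (link_of (by omega)) (link_of (by omega)) (link_of (by omega))
            (by unfold pat; omega) (by omega) (by unfold pat; omega)
            (by unfold pat; omega) (by unfold pat; omega) (by unfold pat; omega)
            (by refine ⟨if i ≤ 6 then 1 else 0, ?_, ?_, ?_, ?_⟩ <;> split <;> omega)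
  · -- tail positions, v = i - 1 shape
    by_cases hwrap : i + 1 = n
    · exact sec_master hn hq hr i (i-3) (i-2) (i-1) i 0 hi (by omega) (by omega)
        (by omega) (by omega) (by omega)
        (link_of (by omega)) (link_of (by omega)) (link_of (by omega)) (link_wrap (by omega))
        (by unfold pat; omega) (by omega) (by unfold pat; omega)
        (by unfold pat; omega) (by unfold pat; omega) (by unfold pat; omega)
        (by refine ⟨if i ≤ 6 then 1 else 0, ?_, ?_, ?_, ?_⟩ <;> split <;> omega)
    · exact sec_master hn hq hr i (i-3) (i-2) (i-1) i (i+1) hi (by omega) (by omega)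
        (by omega) (by omega) (by omega)
        (link_of (by omega)) (link_of (by omega)) (link_of (by omega)) (link_of (by omega))
        (by unfold pat; omega) (by omega) (by unfold pat; omega)
        (by unfold pat; omega) (by unfold pat; omega) (by unfold pat; omega)
        (by refine ⟨if i ≤ 6 then 1 else 0, ?_, ?_, ?_, ?_⟩ <;> split <;> omega)

lemma isISDS_SS : IsISDS (SimpleGraph.cycleGraph n) (SS n q) :=
  ⟨⟨dom_SS hn hq hr, iso_SS hn hq hr⟩, sec_all hn hq hr⟩




end upper

noncomputable def isdNum {V : Type*} [DecidableEq V] (G : SimpleGraph V) : ℕ :=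
  sInf {n | ∃ S : Finset V, IsISDS G S ∧ S.card = n}

/-- For the cycle graph `C_n` on `n ≥ 5` vertices, `γ₀ₛ(C_n) = ⌈3n/7⌉`
(note `(3 * n + 6) / 7 = ⌈3n/7⌉` in natural-number arithmetic). -/
theorem isdNum_cycleGraph (n : ℕ) (hn : 5 ≤ n) :
    isdNum (SimpleGraph.cycleGraph n) = (3 * n + 6) / 7 := by
  haveI : NeZero n := ⟨by omega⟩
  obtain ⟨T, hT, hTcard⟩ : ∃ T : Finset (Fin n),
      IsISDS (SimpleGraph.cycleGraph n) T ∧ T.card = (3*n+6)/7 := by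
    by_cases h14 : 14 ≤ n
    · refine ⟨SS n (n/7), isISDS_SS (r := n % 7) (by omega) (by omega) (by omega),
        card_SS (r := n % 7) (by omega) (by omega) (by omega)⟩
    · have hlt : n < 14 := by omega
      clear this
      interval_cases n
      · refine ⟨({0,2,4} : Finset (Fin 5)), ?_, ?_⟩ <;> decide
      · refine ⟨({0,2,4} : Finset (Fin 6)), ?_, ?_⟩ <;> decide
      · refine ⟨({0,3,5} : Finset (Fin 7)), ?_, ?_⟩ <;> decide
      · refine ⟨({0,2,4,6} : Finset (Fin 8)), ?_, ?_⟩ <;> decide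
      · refine ⟨({0,3,5,7} : Finset (Fin 9)), ?_, ?_⟩ <;> decide
      · refine ⟨({0,3,5,7,9} : Finset (Fin 10)), ?_, ?_⟩ <;> decide
      · refine ⟨({0,3,5,7,9} : Finset (Fin 11)), ?_, ?_⟩ <;> decide
      · refine ⟨({0,3,5,7,9,11} : Finset (Fin 12)), ?_, ?_⟩ <;> decide
      · refine ⟨({0,3,5,7,9,11} : Finset (Fin 13)), ?_, ?_⟩ <;> decide
  have hlow : ∀ T' : Finset (Fin n), IsISDS (SimpleGraph.cycleGraph n) T' →
      (3*n+6)/7 ≤ T'.card := by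
    by_cases h7 : 7 ≤ n
    · exact fun T' h => lower_bound h7 h
    · have hlt : n < 7 := by omega
      clear this T hT hTcard
      interval_cases n
      · exact fun T' h => by
          have : 3 ≤ T'.card := by revert h; revert T'; decide
          omega
      · exact fun T' h => by
          have : 3 ≤ T'.card := by revert h; revert T'; decide
          omega
  apply le_antisymm
  · exact Nat.sInf_le ⟨T, hT, hTcard⟩
  · exact le_csInf ⟨T.card, T, hT, rfl⟩ (by rintro b ⟨T', hT', rfl⟩; exact hlow T' hT')
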